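/- Minimality transfers under projection: with g the perturbation-encoding of f over perturbable set X, if m is a minimal trap space of g and σ is the perturbation decoded from m's values on {v^k, v^o}, then the restriction of m to V is a minimal trap space of f^σ. -/
import Mathlib


/-- A state `s` belongs to the subspace `m` (none = free/⋆). -/
def inSub {V : Type*} (m : V → Option Bool) (s : V → Bool) : Prop :=
  ∀ v b, m v = some b → s v = b

/-- The synchronous update of a Boolean network. -/
def syncUpdate {V : Type*} (f : V → (V → Bool) → Bool) (s : V → Bool) : V → Bool :=
  fun v => f v s

/-- `m` is a trap space: `S[m]` is closed under the synchronous update. -/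
def IsTrapSpace {V : Type*} (f : V → (V → Bool) → Bool) (m : V → Option Bool) : Prop :=
  ∀ s, inSub m s → inSub m (syncUpdate f s)

/-- Boolean expressions over a variable set `V`. -/
inductive BExpr (V : Type*) where
  | const : Bool → BExpr V
  | var : V → BExpr V
  | not : BExpr V → BExpr V
  | and : BExpr V → BExpr V → BExpr V
  | or : BExpr V → BExpr V → BExpr V

/-- Two-valued evaluation of a Boolean expression at a state. -/
def BExpr.eval {V : Type*} : BExpr V → (V → Bool) → Bool
  | .const b, _ => b
  | .var v, s => s v
  | .not e, s => !(e.eval s)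
  | .and e₁ e₂, s => e₁.eval s && e₂.eval s
  | .or e₁ e₂, s => e₁.eval s || e₂.eval s

/-- Minimum w.r.t. the total order 0 <_t ⋆ <_t 1 (⋆ = none). -/
def tmin : Option Bool → Option Bool → Option Bool
  | some false, _ => some false
  | _, some false => some false
  | some true, y => y
  | x, some true => x
  | none, none => none

/-- Maximum w.r.t. the total order 0 <_t ⋆ <_t 1 (⋆ = none). -/
def tmax : Option Bool → Option Bool → Option Bool
  | some true, _ => some true
  | _, some true => some true
  | some false, y => y
  | x, some false => x
  | none, none => none

/-- Kleene three-valued evaluation of a Boolean expression under a subspace. -/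
def BExpr.keval {V : Type*} : BExpr V → (V → Option Bool) → Option Bool
  | .const b, _ => some b
  | .var v, m => m v
  | .not e, m => (e.keval m).map (fun b => !b)
  | .and e₁ e₂, m => tmin (e₁.keval m) (e₂.keval m)
  | .or e₁ e₂, m => tmax (e₁.keval m) (e₂.keval m)

/-- The partial order ≤_s on {0,1,⋆}: x ≤_s y iff x = y or y = ⋆. -/
def leS (x y : Option Bool) : Prop := x = y ∨ y = none

/-- Trap space via the three-valued characterization: m(f_v) ≤_s m(v) for all v. -/
def IsTrapK {V : Type*} (f : V → BExpr V) (m : V → Option Bool) : Prop :=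
  ∀ v, leS ((f v).keval m) (m v)

/-- ≤_s-minimal trap space (three-valued characterization). -/
def IsMinTrapK {V : Type*} (f : V → BExpr V) (m : V → Option Bool) : Prop :=
  IsTrapK f m ∧ ∀ m', IsTrapK f m' → (∀ v, leS (m' v) (m v)) → m' = m

/-- Renaming of variables in a Boolean expression. -/
def BExpr.map {V W : Type*} (φ : V → W) : BExpr V → BExpr W
  | .const b => .const b
  | .var v => .var (φ v)
  | .not e => .not (e.map φ)
  | .and e₁ e₂ => .and (e₁.map φ) (e₂.map φ)
  | .or e₁ e₂ => .or (e₁.map φ) (e₂.map φ)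

/-- Variables of the perturbation-encoding network: original variables plus,
for each perturbable `v ∈ X`, variables `v^k = inr (v, true)` and `v^o = inr (v, false)`. -/
abbrev PVar (V : Type) (X : Finset V) := V ⊕ ({v : V // v ∈ X} × Bool)

/-- The perturbation-encoding network `g` of `f` w.r.t. perturbable set `X`:
`g_{v^k} = v^k`, `g_{v^o} = v^o ∧ ¬v^k`, `g_v = ¬v^k ∧ (v^o ∨ f_v)` for `v ∈ X`,
and `g_u = f_u` otherwise. -/
def pertEnc {V : Type} [DecidableEq V] (f : V → BExpr V) (X : Finset V) :
    PVar V X → BExpr (PVar V X)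
  | .inl v =>
      if h : v ∈ X then
        .and (.not (.var (.inr (⟨v, h⟩, true))))
          (.or (.var (.inr (⟨v, h⟩, false))) ((f v).map .inl))
      else (f v).map .inl
  | .inr (x, true) => .var (.inr (x, true))
  | .inr (x, false) => .and (.var (.inr (x, false))) (.not (.var (.inr (x, true))))

/-- The perturbed network `f^σ`: perturbed variables get the constant `σ(v)`,
unperturbed ones (σ(v) = ⋆) keep `f_v`. -/
def pertNet {V : Type} [DecidableEq V] (f : V → BExpr V) (X : Finset V)
    (σ : {v : V // v ∈ X} → Option Bool) : V → BExpr V := fun v =>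
  if h : v ∈ X then
    match σ ⟨v, h⟩ with
    | some b => .const b
    | none => f v
  else f v

/-- Decode the perturbation from the values of `v^k` and `v^o`:
σ(v) = 1 iff (k,o) = (0,1); σ(v) = 0 iff (k,o) = (1,0); σ(v) = ⋆ iff (k,o) = (0,0). -/
def decodePert (k o : Option Bool) : Option Bool :=
  if k = some false ∧ o = some true then some true
  else if k = some true ∧ o = some false then some false
  else none

lemma leS_refl (x : Option Bool) : leS x x := Or.inl rfl

lemma keval_map_eq {V W : Type*} (φ : V → W) (m : W → Option Bool) :
    ∀ e : BExpr V, (e.map φ).keval m = e.keval (fun v => m (φ v)) := by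
  intro e
  induction e with
  | const b => rfl
  | var v => rfl
  | not e ih => simp [BExpr.map, BExpr.keval, ih]
  | and e₁ e₂ ih₁ ih₂ => simp [BExpr.map, BExpr.keval, ih₁, ih₂]
  | or e₁ e₂ ih₁ ih₂ => simp [BExpr.map, BExpr.keval, ih₁, ih₂]

@[simp] lemma tmin_false : ∀ y, tmin (some false) y = some false := by decide
@[simp] lemma tmin_true : ∀ y, tmin (some true) y = y := by decide
@[simp] lemma tmax_true : ∀ y, tmax (some true) y = some true := by decide
@[simp] lemma tmax_false : ∀ y, tmax (some false) y = y := by decide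

instance leS.dec (x y : Option Bool) : Decidable (leS x y) := by
  unfold leS; infer_instance

lemma pick_spec : ∀ (a b y c : Option Bool),
    leS (tmin (a.map (fun b => !b)) (tmax b y)) c →
    leS (tmin b (a.map (fun b => !b))) b →
    ∃ k o : Bool,
      leS (some k) a ∧ leS (some o) b ∧
      leS (tmin (some (!k)) (tmax (some o) y)) c ∧
      leS (tmin (some o) (some (!k))) (some o) ∧
      ¬(k = true ∧ o = true) := by decide

/-- Minimality transfers under projection: if `m` is a minimal trap space of the
perturbation-encoding network `g` and `σ` is the perturbation decoded from `m`'s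
values on the encoding variables, then the restriction of `m` to `V` is a
minimal trap space of `f^σ`. -/
theorem minimal_trap_space_projection {V : Type} [Fintype V] [DecidableEq V]
    (f : V → BExpr V) (X : Finset V) (m : PVar V X → Option Bool)
    (hm : IsMinTrapK (pertEnc f X) m) :
    IsMinTrapK
      (pertNet f X (fun x => decodePert (m (.inr (x, true))) (m (.inr (x, false)))))
      (fun v => m (.inl v)) := by
  classical
  obtain ⟨hT, hMin⟩ := hm
  have stepA : ∀ x : {v : V // v ∈ X}, ∃ k o : Bool,
      m (.inr (x, true)) = some k ∧ m (.inr (x, false)) = some o ∧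
      ¬(k = true ∧ o = true) := by
    rintro ⟨v, hv⟩
    have h1 := hT (.inl v)
    have h2 := hT (.inr (⟨v, hv⟩, false))
    simp only [pertEnc, dif_pos hv, BExpr.keval, keval_map_eq] at h1 h2
    obtain ⟨k, o, hk, ho, h3, h4, hko⟩ := pick_spec _ _ _ _ h1 h2
    set xk : PVar V X := Sum.inr (⟨v, hv⟩, true) with hxk
    set xo : PVar V X := Sum.inr (⟨v, hv⟩, false) with hxo
    set m' : PVar V X → Option Bool :=
      fun u => if u = xk then some k else if u = xo then some o else m u with hm'
    have hminl : ∀ u : V, m' (Sum.inl u) = m (Sum.inl u) := by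
      intro u; simp [hm', hxk, hxo]
    have hle : ∀ u, leS (m' u) (m u) := by
      intro u
      by_cases h : u = xk
      · subst h; simpa [hm'] using hk
      · by_cases h' : u = xo
        · subst h'; simp [hm', h]; simpa using ho
        · simp [hm', h, h']; exact leS_refl _
    have htrap : IsTrapK (pertEnc f X) m' := by
      intro u
      match u with
      | .inr (z, true) => exact leS_refl _
      | .inr (z, false) =>
        by_cases hz : z = ⟨v, hv⟩
        · subst hz
          have e1 : m' (Sum.inr (⟨v, hv⟩, true)) = some k := by simp [hm', hxk]
          have e2 : m' (Sum.inr (⟨v, hv⟩, false)) = some o := by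
            simp [hm', hxk, hxo]
          simp only [pertEnc, BExpr.keval, e1, e2, Option.map_some]
          exact h4
        · have e1 : m' (Sum.inr (z, true)) = m (Sum.inr (z, true)) := by
            simp [hm', hxk, hxo, hz]
          have e2 : m' (Sum.inr (z, false)) = m (Sum.inr (z, false)) := by
            simp [hm', hxk, hxo, hz]
          simp only [pertEnc, BExpr.keval, e1, e2]
          exact hT (.inr (z, false))
      | .inl w =>
        have hfun : (fun u => m' (Sum.inl u)) = fun u => m (Sum.inl u) :=
          funext hminl
        by_cases hw : w ∈ X
        · by_cases hwv : w = v
          · subst hwv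
            have hsub : (⟨w, hw⟩ : {v : V // v ∈ X}) = ⟨w, hv⟩ := rfl
            have e1 : m' (Sum.inr (⟨w, hw⟩, true)) = some k := by
              rw [hsub]; simp [hm', hxk]
            have e2 : m' (Sum.inr (⟨w, hw⟩, false)) = some o := by
              rw [hsub]; simp [hm', hxk, hxo]
            simp only [pertEnc, dif_pos hw, BExpr.keval, keval_map_eq, e1, e2,
              Option.map_some, hminl]
            exact h3
          · have e1 : m' (Sum.inr (⟨w, hw⟩, true)) = m (Sum.inr (⟨w, hw⟩, true)) := by
              simp [hm', hxk, hxo, Subtype.ext_iff, hwv]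
            have e2 : m' (Sum.inr (⟨w, hw⟩, false)) = m (Sum.inr (⟨w, hw⟩, false)) := by
              simp [hm', hxk, hxo, Subtype.ext_iff, hwv]
            simp only [pertEnc, dif_pos hw, BExpr.keval, keval_map_eq, e1, e2, hfun,
              hminl]
            have := hT (.inl w)
            simp only [pertEnc, dif_pos hw, BExpr.keval, keval_map_eq] at this
            exact this
        · simp only [pertEnc, dif_neg hw, keval_map_eq, hfun, hminl]
          have := hT (.inl w)
          simp only [pertEnc, dif_neg hw, keval_map_eq] at this
          exact this
    have heq := hMin m' htrap hle
    refine ⟨k, o, ?_, ?_, hko⟩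
    · rw [← heq]; simp [hm', hxk]
    · rw [← heq]; simp [hm', hxk, hxo]
  constructor
  · intro v
    by_cases h : v ∈ X
    · obtain ⟨k, o, hk, ho, hko⟩ := stepA ⟨v, h⟩
      have h1 := hT (.inl v)
      simp only [pertEnc, dif_pos h, BExpr.keval, keval_map_eq, hk, ho,
        Option.map_some] at h1
      simp only [pertNet, dif_pos h, hk, ho]
      cases k <;> cases o <;>
        simp only [decodePert, Option.some.injEq, and_self, and_false, false_and,
          and_true, reduceIte, reduceCtorEq, Bool.not_false, Bool.not_true, tmin_true,
          tmin_false, tmax_true, tmax_false, BExpr.keval] at h1 ⊢ <;>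
        first
          | exact h1
          | exact absurd ⟨rfl, rfl⟩ hko
    · have h1 := hT (.inl v)
      simp only [pertEnc, dif_neg h, keval_map_eq] at h1
      simp only [pertNet, dif_neg h]
      exact h1
  · intro m' hm' hle'
    set m'' : PVar V X → Option Bool := Sum.elim m' (fun z => m (.inr z)) with hm''
    have htrap'' : IsTrapK (pertEnc f X) m'' := by
      intro u
      match u with
      | .inr (z, true) => exact leS_refl _
      | .inr (z, false) => exact hT (.inr (z, false))
      | .inl v =>
        by_cases h : v ∈ X
        · obtain ⟨k, o, hk, ho, hko⟩ := stepA ⟨v, h⟩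
          have h2 := hm' v
          simp only [pertNet, dif_pos h, hk, ho] at h2
          have e1 : m'' (Sum.inr (⟨v, h⟩, true)) = some k := hk
          have e2 : m'' (Sum.inr (⟨v, h⟩, false)) = some o := ho
          simp only [pertEnc, dif_pos h, BExpr.keval, keval_map_eq, e1, e2,
            Option.map_some]
          have e3 : (fun u => m'' (Sum.inl u)) = m' := rfl
          have e4 : m'' (Sum.inl v) = m' v := rfl
          rw [e3, e4]
          cases k <;> cases o <;>
            simp only [decodePert, Option.some.injEq, and_self, and_false, false_and,
              and_true, reduceIte, reduceCtorEq, Bool.not_false, Bool.not_true,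
              tmin_true, tmin_false, tmax_true, tmax_false, BExpr.keval] at h2 ⊢ <;>
            first
              | exact h2
              | exact absurd ⟨rfl, rfl⟩ hko
        · have h2 := hm' v
          simp only [pertNet, dif_neg h] at h2
          simp only [pertEnc, dif_neg h, keval_map_eq]
          exact h2
    have hle'' : ∀ u, leS (m'' u) (m u) := by
      intro u
      match u with
      | .inl v => exact hle' v
      | .inr z => exact leS_refl _
    have heq := hMin m'' htrap'' hle''
    funext v
    exact congrFun heq (.inl v)
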